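/- Let ν = {ν_t}_{t>0} be a factorizing family over [0,1]×{*}. Fix s,t>0 and for λ>0 put u = λ(s+t), u₁ = λs, u₂ = λt, and σ := (ν_{u₁}⊗ν_{u₂})∘⊕_{u₁,u₂}^{-1} on 𝒞_u^*. Define the block-occupancy events E_{00} = {∅}, E_{10} = {Z : Z∩[0,u₁] ≠ ∅, Z∩[u₁,u] = ∅}, E_{01} = {Z : Z∩[0,u₁] = ∅, Z∩[u₁,u] ≠ ∅}, E_{11} = {Z : Z∩[0,u₁] ≠ ∅, Z∩[u₁,u] ≠ ∅}. Assume there exist constants C < ∞ and λ₀ > 0 such that for all 0 < λ ≤ λ₀: (i) ν_u({Z ≠ ∅}) ≤ C·u and ν_{u_i}({Z ≠ ∅}) ≤ C·u_i for i = 1,2; (ii) ν_u(E_{11}) ≤ C·u²; (iii) |ν_u({∅}) − ν_{u₁}({∅})·ν_{u₂}({∅})| ≤ C·u²; (iv) d²_Hell(ν_u↾E_{10}, σ↾E_{10}) ≤ C·u² and d²_Hell(ν_u↾E_{01}, σ↾E_{01}) ≤ C·u². Then there exist C′ < ∞ and λ₀′ > 0 such that 1 − H(ν_u, σ) ≤ C′·u²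 for all 0 < λ ≤ λ₀′. -/

import Mathlib

open MeasureTheory Set
open scoped ENNReal NNReal

namespace RandomSets

variable (L : Type) [TopologicalSpace L]

/-- The time strip `[0,t] × L` inside `ℝ × L`. -/
def strip (t : ℝ) : Set (ℝ × L) := Set.Icc (0:ℝ) t ×ˢ (Set.univ : Set L)

lemma isClosed_strip (t : ℝ) : IsClosed (strip L t) :=
  isClosed_Icc.prod isClosed_univ

/-- Closed subsets of `[0,t] × L`, modeled as closed subsets of `ℝ × L`
contained in the strip `[0,t] × L`. -/
def Cl (t : ℝ) : Type := {F : Set (ℝ × L) // IsClosed F ∧ F ⊆ strip L t}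

variable {L}

lemma isClosed_fstImage (f g : ℝ → ℝ) (hg : Continuous g)
    (hgf : ∀ x, g (f x) = x) (hfg : ∀ x, f (g x) = x)
    {A : Set (ℝ × L)} (hA : IsClosed A) :
    IsClosed ((fun p : ℝ × L => (f p.1, p.2)) '' A) := by
  have h : (fun p : ℝ × L => (f p.1, p.2)) '' A
      = (fun p : ℝ × L => (g p.1, p.2)) ⁻¹' A := by
    ext p
    constructor
    · rintro ⟨q, hq, rfl⟩
      simpa [hgf] using hq
    · intro hp
      exact ⟨(g p.1, p.2), hp, by simp [hfg]⟩
  rw [h]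
  exact hA.preimage (by fun_prop)

variable (L)

/-- The Fell topology on `Cl L t`: generated by the hit sets of relatively open
subsets of the strip and the miss sets of compact subsets of the strip. -/
def fellTop (t : ℝ) : TopologicalSpace (Cl L t) :=
  TopologicalSpace.generateFrom
    ({S | ∃ U : Set (ℝ × L), IsOpen U ∧
        S = {F : Cl L t | (F.1 ∩ (U ∩ strip L t)).Nonempty}} ∪
     {S | ∃ K : Set (ℝ × L), IsCompact K ∧ K ⊆ strip L t ∧
        S = {F : Cl L t | F.1 ∩ K = ∅}})

instance (t : ℝ) : TopologicalSpace (Cl L t) := fellTop L t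

instance (t : ℝ) : MeasurableSpace (Cl L t) := borel (Cl L t)

/-- The empty closed set. -/
noncomputable def emptyCl (t : ℝ) : Cl L t := ⟨∅, isClosed_empty, Set.empty_subset _⟩

variable {L}

/-- Concatenation of a closed subset of `[0,s] × L` with a closed subset of
`[0,t] × L` (the latter translated by `s` in time), yielding a closed subset
of `[0,s+t] × L`. -/
noncomputable def concat (s t : ℝ) (Z₁ : Cl L s) (Z₂ : Cl L t) : Cl L (s + t) :=
  ⟨(Z₁.1 ∪ (fun p : ℝ × L => (p.1 + s, p.2)) '' Z₂.1) ∩ strip L (s + t), by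
    refine ⟨IsClosed.inter ?_ (isClosed_strip L _), Set.inter_subset_right⟩
    exact Z₁.2.1.union (isClosed_fstImage (· + s) (· - s) (by fun_prop)
      (fun x => by ring) (fun x => by ring) Z₂.2.1)⟩

/-- Concatenation as a map on pairs. -/
noncomputable def concatMap (s t : ℝ) : Cl L s × Cl L t → Cl L (s + t) :=
  fun p => concat s t p.1 p.2

/-- Transport along an equality of time horizons. -/
noncomputable def recast {a b : ℝ} (h : a = b) (Z : Cl L a) : Cl L b :=
  ⟨Z.1, Z.2.1, h ▸ Z.2.2⟩

/-- `Z ∩ ([0,s] × L)`, as a closed subset of `[0,s] × L`. -/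
noncomputable def initPart (s : ℝ) {w : ℝ} (Z : Cl L w) : Cl L s :=
  ⟨Z.1 ∩ strip L s, (Z.2.1.inter (isClosed_strip L s)), Set.inter_subset_right⟩

/-- `(Z ∩ ([s,s+t] × L)) - (s,0)`, as a closed subset of `[0,t] × L`. -/
noncomputable def tailPart (s t : ℝ) {w : ℝ} (Z : Cl L w) : Cl L t :=
  ⟨(fun p : ℝ × L => (p.1 - s, p.2)) '' (Z.1 ∩ (Set.Icc s (s + t) ×ˢ (Set.univ : Set L))), by
    constructor
    · exact isClosed_fstImage (· - s) (· + s) (by fun_prop)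
        (fun x => by ring) (fun x => by ring)
        (Z.2.1.inter (isClosed_Icc.prod isClosed_univ))
    · rintro p ⟨q, ⟨-, hq⟩, rfl⟩
      simp only [Set.mem_prod, Set.mem_Icc, Set.mem_univ, and_true] at hq
      simp only [strip, Set.mem_prod, Set.mem_Icc, Set.mem_univ, and_true]
      constructor <;> linarith [hq.1, hq.2]⟩

/-- Time rescaling `𝒞_t → 𝒞_1`, `Z ↦ {(r/t, ℓ) : (r,ℓ) ∈ Z}` (junk value for `t ≤ 0`). -/
noncomputable def timeScale (t : ℝ) (Z : Cl L t) : Cl L 1 :=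
  if ht : 0 < t then
    ⟨(fun p : ℝ × L => (p.1 / t, p.2)) '' Z.1, by
      constructor
      · exact isClosed_fstImage (· / t) (· * t)
          (by fun_prop) (fun x => div_mul_cancel₀ x ht.ne')
          (fun x => mul_div_cancel_right₀ x ht.ne') Z.2.1
      · rintro p ⟨q, hq, rfl⟩
        have h1 := Z.2.2 hq
        simp only [strip, Set.mem_prod, Set.mem_Icc, Set.mem_univ, and_true] at h1 ⊢
        exact ⟨div_nonneg h1.1 ht.le, (div_le_one ht).mpr h1.2⟩⟩
  else emptyCl L 1

/-- Definition 2.2 (i)–(ii): a factorizing family of probability measures over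
`[0,1] × L`. -/
def IsFactorizing (μ : (t : ℝ) → Measure (Cl L t)) : Prop :=
  (∀ t : ℝ, 0 < t → IsProbabilityMeasure (μ t)) ∧
  (∀ s t : ℝ, 0 < s → 0 < t →
    μ (s + t) ≪ Measure.map (concatMap s t) ((μ s).prod (μ t)) ∧
    Measure.map (concatMap s t) ((μ s).prod (μ t)) ≪ μ (s + t)) ∧
  (∀ t : ℝ, 0 < t → ∀ r ∈ Set.Icc (0:ℝ) t,
    μ t {Z : Cl L t | ∃ ℓ : L, (r, ℓ) ∈ Z.1} = 0)

/-- Definition 2.2 (i)–(iv): a measurable factorizing family. -/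
def IsMeasurableFactorizing (μ : (t : ℝ) → Measure (Cl L t)) : Prop :=
  IsFactorizing μ ∧
  (∀ t : ℝ, 0 < t → ∀ S : Finset (Cl L t), μ t ((↑S : Set (Cl L t))ᶜ) ≠ 0) ∧
  (∃ R : Set (Set (Cl L 1)), R.Countable ∧ MeasureTheory.IsSetRing R ∧
    MeasurableSpace.generateFrom R = (inferInstance : MeasurableSpace (Cl L 1)) ∧
    ∀ A ∈ R, Measurable fun t : Set.Ioi (0:ℝ) =>
      Measure.map (timeScale t.1) (μ t.1) A) ∧
  (∃ Δ : ℝ → ℝ → Cl L 1 → ℝ≥0∞,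
    Measurable (fun p : (ℝ × ℝ) × Cl L 1 => Δ p.1.1 p.1.2 p.2) ∧
    (∀ s t Z, 0 < Δ s t Z ∧ Δ s t Z < ⊤) ∧
    ∀ s t : ℝ, 0 < s → 0 < t →
      (fun Z => Δ s t (timeScale (s + t) Z)) =ᵐ[μ (s + t)]
        (Measure.map (concatMap s t) ((μ s).prod (μ t))).rnDeriv (μ (s + t)))


/-- The Hellinger affinity `H(ρ,η) = ∫ √((dρ/dm)(dη/dm)) dm` of two finite measures
(computed with the dominating measure `m = ρ + η`; it is independent of the choice
of dominating measure). -/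
noncomputable def hellingerAff {X : Type*} [MeasurableSpace X] (ρ η : Measure X) : ℝ :=
  (∫⁻ x, (ρ.rnDeriv (ρ + η) x * η.rnDeriv (ρ + η) x) ^ (1/2 : ℝ) ∂(ρ + η)).toReal

/-- The squared Hellinger distance `d²(ρ,η) = ρ(X) + η(X) - 2 H(ρ,η)`. -/
noncomputable def d2Hell {X : Type*} [MeasurableSpace X] (ρ η : Measure X) : ℝ :=
  (ρ Set.univ).toReal + (η Set.univ).toReal - 2 * hellingerAff ρ η

/-- The event that `Z` meets the time window `[a,b]` (over `[0,1] × {*}`). -/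
def hitsIcc (u a b : ℝ) : Set (Cl Unit u) :=
  {Z | (Z.1 ∩ (Set.Icc a b ×ˢ (Set.univ : Set Unit))).Nonempty}

/-- The event that `Z` misses the time window `[a,b]` (over `[0,1] × {*}`). -/
def missIcc (u a b : ℝ) : Set (Cl Unit u) :=
  {Z | Z.1 ∩ (Set.Icc a b ×ˢ (Set.univ : Set Unit)) = ∅}

section Aux

instance (t : ℝ) : BorelSpace (Cl L t) := ⟨rfl⟩

lemma isOpen_missSet {t : ℝ} {K : Set (ℝ × L)} (hK : IsCompact K) (hKs : K ⊆ strip L t) :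
    IsOpen {F : Cl L t | F.1 ∩ K = ∅} :=
  TopologicalSpace.isOpen_generateFrom_of_mem (Or.inr ⟨K, hK, hKs, rfl⟩)

lemma measurableSet_missIcc {t a b : ℝ} (ha : 0 ≤ a) (hb : b ≤ t) :
    MeasurableSet (missIcc t a b) := by
  have h : IsOpen (missIcc t a b) := by
    apply isOpen_missSet (isCompact_Icc.prod isCompact_univ)
    rintro ⟨x, ℓ⟩ ⟨hx, -⟩
    exact ⟨⟨le_trans ha hx.1, le_trans hx.2 hb⟩, trivial⟩
  exact h.measurableSet

lemma hitsIcc_eq_compl (t a b : ℝ) : hitsIcc t a b = (missIcc t a b)ᶜ := by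
  ext Z
  simp [hitsIcc, missIcc, Set.nonempty_iff_ne_empty]

lemma measurableSet_hitsIcc {t a b : ℝ} (ha : 0 ≤ a) (hb : b ≤ t) :
    MeasurableSet (hitsIcc t a b) := by
  rw [hitsIcc_eq_compl]; exact (measurableSet_missIcc ha hb).compl

lemma singleton_emptyCl_eq (w : ℝ) :
    ({emptyCl Unit w} : Set (Cl Unit w)) = missIcc w 0 w := by
  ext Z
  have hZ : Z.1 ∩ (Set.Icc (0:ℝ) w ×ˢ (Set.univ : Set Unit)) = Z.1 :=
    Set.inter_eq_left.mpr Z.2.2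
  simp only [Set.mem_singleton_iff, missIcc, Set.mem_setOf_eq, hZ]
  constructor
  · rintro rfl; rfl
  · intro h; exact Subtype.ext h

lemma measurableSet_singleton_emptyCl (w : ℝ) :
    MeasurableSet ({emptyCl Unit w} : Set (Cl Unit w)) := by
  rw [singleton_emptyCl_eq]; exact measurableSet_missIcc le_rfl le_rfl

lemma nonemptySet_eq (w : ℝ) :
    {Z : Cl Unit w | Z.1.Nonempty} = (missIcc w 0 w)ᶜ := by
  ext Z
  have hZ : Z.1 ∩ (Set.Icc (0:ℝ) w ×ˢ (Set.univ : Set Unit)) = Z.1 :=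
    Set.inter_eq_left.mpr Z.2.2
  simp [missIcc, hZ, Set.nonempty_iff_ne_empty]

lemma measurableSet_nonemptySet (w : ℝ) :
    MeasurableSet {Z : Cl Unit w | Z.1.Nonempty} := by
  rw [nonemptySet_eq]; exact (measurableSet_missIcc le_rfl le_rfl).compl

end Aux
section HellAux

variable {X : Type*} [MeasurableSpace X] (ρ η : Measure X) [IsFiniteMeasure ρ] [IsFiniteMeasure η]

lemma rnDeriv_restrict_of_ac (h : ρ ≪ η) {E : Set X} (hE : MeasurableSet E) :
    (ρ.restrict E).rnDeriv (η.restrict E) =ᵐ[η.restrict E] ρ.rnDeriv η := by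
  have h1 : (η.restrict E).withDensity (ρ.rnDeriv η) = ρ.restrict E := by
    rw [← restrict_withDensity hE, Measure.withDensity_rnDeriv_eq _ _ h]
  rw [← h1]
  exact Measure.rnDeriv_withDensity _ (Measure.measurable_rnDeriv _ _)

lemma hellingerAff_restrict_eq {E : Set X} (hE : MeasurableSet E) :
    hellingerAff (ρ.restrict E) (η.restrict E)
      = (∫⁻ x in E,
          (ρ.rnDeriv (ρ + η) x * η.rnDeriv (ρ + η) x) ^ (1/2 : ℝ) ∂(ρ + η)).toReal := by
  have hsum : ρ.restrict E + η.restrict E = (ρ + η).restrict E :=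
    (Measure.restrict_add ρ η E).symm
  have hρac : ρ ≪ ρ + η := Measure.absolutelyContinuous_of_le (Measure.le_add_right le_rfl)
  have hηac : η ≪ ρ + η := Measure.absolutelyContinuous_of_le (Measure.le_add_left le_rfl)
  have hρ := rnDeriv_restrict_of_ac ρ (ρ + η) hρac hE
  have hη := rnDeriv_restrict_of_ac η (ρ + η) hηac hE
  unfold hellingerAff
  rw [hsum]
  congr 1
  apply lintegral_congr_ae
  filter_upwards [hρ, hη] with x hx hy
  rw [hx, hy]

lemma d2Hell_restrict_eq {E : Set X} (hE : MeasurableSet E) :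
    d2Hell (ρ.restrict E) (η.restrict E)
      = (ρ E).toReal + (η E).toReal
        - 2 * (∫⁻ x in E,
            (ρ.rnDeriv (ρ + η) x * η.rnDeriv (ρ + η) x) ^ (1/2 : ℝ) ∂(ρ + η)).toReal := by
  unfold d2Hell
  rw [Measure.restrict_apply_univ, Measure.restrict_apply_univ, hellingerAff_restrict_eq ρ η hE]

lemma setLIntegral_singleton' {z : X} (hz : MeasurableSet ({z} : Set X)) (μ : Measure X)
    (h : X → ℝ≥0∞) : ∫⁻ x in {z}, h x ∂μ = h z * μ {z} := by
  rw [setLIntegral_congr_fun hz ((fun x hx => by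
    rw [Set.mem_singleton_iff] at hx; rw [hx] : ∀ x ∈ ({z} : Set X), h x = h z)),
    setLIntegral_const]

lemma sqrt_lintegral_singleton {z : X} (hz : MeasurableSet ({z} : Set X)) :
    (∫⁻ x in {z},
        (ρ.rnDeriv (ρ + η) x * η.rnDeriv (ρ + η) x) ^ (1/2 : ℝ) ∂(ρ + η)).toReal
      = Real.sqrt ((ρ {z}).toReal * (η {z}).toReal) := by
  have hρac : ρ ≪ ρ + η := Measure.absolutelyContinuous_of_le (Measure.le_add_right le_rfl)
  have hηac : η ≪ ρ + η := Measure.absolutelyContinuous_of_le (Measure.le_add_left le_rfl)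
  set m := ρ + η with hm
  set f := ρ.rnDeriv m with hf
  set g := η.rnDeriv m with hg
  have hρz : f z * m {z} = ρ {z} := by
    rw [← setLIntegral_singleton' hz m f]
    exact Measure.setLIntegral_rnDeriv' hρac hz
  have hηz : g z * m {z} = η {z} := by
    rw [← setLIntegral_singleton' hz m g]
    exact Measure.setLIntegral_rnDeriv' hηac hz
  rw [setLIntegral_singleton' hz]
  rcases eq_or_ne (m {z}) 0 with hmz | hmz
  · have h1 : ρ {z} = 0 := by rw [← hρz, hmz, mul_zero]
    have h2 : η {z} = 0 := by rw [← hηz, hmz, mul_zero]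
    simp [hmz, h1, h2]
  · have hmtop : m {z} ≠ ⊤ := measure_ne_top m _
    have hftop : f z ≠ ⊤ := by
      intro h
      rw [h, ENNReal.top_mul hmz] at hρz
      exact (measure_ne_top ρ _) hρz.symm
    have hgtop : g z ≠ ⊤ := by
      intro h
      rw [h, ENNReal.top_mul hmz] at hηz
      exact (measure_ne_top η _) hηz.symm
    rw [← hρz, ← hηz]
    rw [ENNReal.toReal_mul, ENNReal.toReal_mul, ENNReal.toReal_mul]
    rw [← ENNReal.toReal_rpow, ENNReal.toReal_mul]
    set F := (f z).toReal
    set G := (g z).toReal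
    set M := (m {z}).toReal
    have hFn : 0 ≤ F := ENNReal.toReal_nonneg
    have hGn : 0 ≤ G := ENNReal.toReal_nonneg
    have hMn : 0 ≤ M := ENNReal.toReal_nonneg
    have : F * M * (G * M) = (F * G) * M ^ 2 := by ring
    rw [this, Real.sqrt_mul (by positivity), Real.sqrt_sq hMn, Real.sqrt_eq_rpow]

lemma rpow_half_mul_le (x y : ℝ≥0∞) : (x * y) ^ (1/2 : ℝ) ≤ x + y := by
  rcases le_total x y with h | h
  · rcases eq_or_ne y ⊤ with rfl | hytop
    · exact le_trans le_top (le_add_self.trans_eq rfl)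
    rcases eq_or_ne y 0 with rfl | hy0
    · have : x = 0 := le_antisymm (by simpa using h) zero_le
      simp [this]
    calc (x * y) ^ (1/2 : ℝ) ≤ (y * y) ^ (1/2 : ℝ) := by
          exact ENNReal.rpow_le_rpow (mul_le_mul_left h y) (by norm_num)
      _ = y ^ (1/2 : ℝ) * y ^ (1/2 : ℝ) := ENNReal.mul_rpow_of_nonneg _ _ (by norm_num)
      _ = y := by
          rw [← ENNReal.rpow_add _ _ hy0 hytop]; norm_num
      _ ≤ x + y := le_add_self
  · rcases eq_or_ne x ⊤ with rfl | hxtop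
    · simp
    rcases eq_or_ne x 0 with rfl | hx0
    · have : y = 0 := le_antisymm (by simpa using h) zero_le
      simp [this]
    calc (x * y) ^ (1/2 : ℝ) ≤ (x * x) ^ (1/2 : ℝ) := by
          exact ENNReal.rpow_le_rpow (mul_le_mul_right h x) (by norm_num)
      _ = x ^ (1/2 : ℝ) * x ^ (1/2 : ℝ) := ENNReal.mul_rpow_of_nonneg _ _ (by norm_num)
      _ = x := by
          rw [← ENNReal.rpow_add _ _ hx0 hxtop]; norm_num
      _ ≤ x + y := le_self_add

lemma sqrt_diff_sq_le_abs {a b : ℝ} (ha : 0 ≤ a) (hb : 0 ≤ b) :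
    a + b - 2 * Real.sqrt (a * b) ≤ |a - b| := by
  have h1 := Real.sq_sqrt ha
  have h2 := Real.sq_sqrt hb
  have h3 := Real.sqrt_nonneg a
  have h4 := Real.sqrt_nonneg b
  have h5 : Real.sqrt (a * b) = Real.sqrt a * Real.sqrt b := Real.sqrt_mul ha b
  rcases le_total a b with h | h
  · rw [abs_of_nonpos (by linarith)]
    have h6 : Real.sqrt a ≤ Real.sqrt b := Real.sqrt_le_sqrt h
    nlinarith
  · rw [abs_of_nonneg (by linarith)]
    have h6 : Real.sqrt b ≤ Real.sqrt a := Real.sqrt_le_sqrt h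
    nlinarith

end HellAux
section ConcatAux

lemma concat_val {u1 u2 : ℝ} (h1 : 0 ≤ u1) (h2 : 0 ≤ u2) (Z₁ : Cl Unit u1) (Z₂ : Cl Unit u2) :
    (concat u1 u2 Z₁ Z₂).1 = Z₁.1 ∪ (fun p : ℝ × Unit => (p.1 + u1, p.2)) '' Z₂.1 := by
  show (Z₁.1 ∪ _) ∩ strip Unit (u1 + u2) = _
  apply Set.inter_eq_left.mpr
  rintro p (hp | ⟨q, hq, rfl⟩)
  · have := Z₁.2.2 hp
    simp only [strip, Set.mem_prod, Set.mem_Icc, Set.mem_univ, and_true] at this ⊢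
    exact ⟨this.1, by linarith [this.2]⟩
  · have := Z₂.2.2 hq
    simp only [strip, Set.mem_prod, Set.mem_Icc, Set.mem_univ, and_true] at this ⊢
    exact ⟨by linarith [this.1], by linarith [this.2]⟩

lemma concatMap_preimage_emptyCl {u1 u2 : ℝ} (h1 : 0 ≤ u1) (h2 : 0 ≤ u2) :
    concatMap u1 u2 ⁻¹' ({emptyCl Unit (u1 + u2)} : Set (Cl Unit (u1 + u2)))
      = ({emptyCl Unit u1} : Set (Cl Unit u1)) ×ˢ ({emptyCl Unit u2} : Set (Cl Unit u2)) := by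
  ext ⟨Z₁, Z₂⟩
  simp only [Set.mem_preimage, Set.mem_singleton_iff, Set.mem_prod]
  rw [show (concatMap u1 u2 (Z₁, Z₂) = emptyCl Unit (u1 + u2)) ↔ _ from Subtype.ext_iff,
    show (Z₁ = emptyCl Unit u1) ↔ _ from Subtype.ext_iff,
    show (Z₂ = emptyCl Unit u2) ↔ _ from Subtype.ext_iff]
  show (concatMap u1 u2 (Z₁, Z₂)).1 = (∅ : Set (ℝ × Unit)) ↔ _
  rw [show (concatMap u1 u2 (Z₁, Z₂)).1 = (concat u1 u2 Z₁ Z₂).1 from rfl,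
    concat_val h1 h2, Set.union_empty_iff, Set.image_eq_empty]
  exact Iff.rfl

/-- If the concatenation hits both blocks then (both factors are nonempty) or one of the
two exceptional null events occurs. -/
lemma concatMap_preimage_hits_subset {u1 u2 : ℝ} (h1 : 0 ≤ u1) (h2 : 0 ≤ u2) :
    concatMap u1 u2 ⁻¹'
        (hitsIcc (u1 + u2) 0 u1 ∩ hitsIcc (u1 + u2) u1 (u1 + u2))
      ⊆ ({Z : Cl Unit u1 | Z.1.Nonempty} ×ˢ {Z : Cl Unit u2 | Z.1.Nonempty})
        ∪ ((Set.univ : Set (Cl Unit u1)) ×ˢ {Z : Cl Unit u2 | ∃ ℓ : Unit, ((0:ℝ), ℓ) ∈ Z.1})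
        ∪ ({Z : Cl Unit u1 | ∃ ℓ : Unit, (u1, ℓ) ∈ Z.1} ×ˢ (Set.univ : Set (Cl Unit u2))) := by
  rintro ⟨Z₁, Z₂⟩ ⟨ha, hb⟩
  simp only [hitsIcc, Set.mem_setOf_eq] at ha hb
  rw [show (concatMap u1 u2 (Z₁, Z₂)).1 = (concat u1 u2 Z₁ Z₂).1 from rfl,
    concat_val h1 h2] at ha hb
  obtain ⟨p, hp, hpmem⟩ := ha
  obtain ⟨q, hq, hqmem⟩ := hb
  simp only [Set.mem_prod, Set.mem_Icc, Set.mem_univ, and_true] at hpmem hqmem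
  -- analyze where p lives
  have hP : Z₁.1.Nonempty ∨ (∃ ℓ : Unit, ((0:ℝ), ℓ) ∈ Z₂.1) := by
    rcases hp with hp | ⟨r, hr, rfl⟩
    · exact Or.inl ⟨p, hp⟩
    · right
      have hr0 : 0 ≤ r.1 := by
        have := Z₂.2.2 hr
        simp only [strip, Set.mem_prod, Set.mem_Icc, Set.mem_univ, and_true] at this
        exact this.1
      have : r.1 = 0 := by
        have := hpmem.2
        simp only at this
        linarith
      refine ⟨r.2, ?_⟩
      have hre : ((0:ℝ), r.2) = r := by
        rcases r with ⟨r1, r2⟩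
        simp only at this
        simp [this]
      rwa [hre]
  have hQ : Z₂.1.Nonempty ∨ (∃ ℓ : Unit, (u1, ℓ) ∈ Z₁.1) := by
    rcases hq with hq | ⟨r, hr, rfl⟩
    · right
      have hru : q.1 ≤ u1 := by
        have := Z₁.2.2 hq
        simp only [strip, Set.mem_prod, Set.mem_Icc, Set.mem_univ, and_true] at this
        exact this.2
      have hq1 : q.1 = u1 := le_antisymm hru hqmem.1
      refine ⟨q.2, ?_⟩
      have hre : (u1, q.2) = q := by
        rcases q with ⟨q1, q2⟩
        simp only at hq1
        simp [hq1]
      rwa [hre]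
    · exact Or.inl ⟨r, hr⟩
  rcases hP with hP | hP
  · rcases hQ with hQ | hQ
    · exact Or.inl (Or.inl ⟨hP, hQ⟩)
    · exact Or.inr ⟨hQ, trivial⟩
  · exact Or.inl (Or.inr ⟨trivial, hP⟩)

lemma missIcc_inter_missIcc_eq {u1 u2 : ℝ} (h1 : 0 ≤ u1) (h2 : 0 ≤ u2) :
    missIcc (u1 + u2) 0 u1 ∩ missIcc (u1 + u2) u1 (u1 + u2)
      = ({emptyCl Unit (u1 + u2)} : Set (Cl Unit (u1 + u2))) := by
  ext Z
  simp only [Set.mem_inter_iff, missIcc, Set.mem_setOf_eq, Set.mem_singleton_iff]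
  constructor
  · rintro ⟨hA, hB⟩
    apply Subtype.ext
    show Z.1 = ∅
    by_contra hne
    obtain ⟨p, hp⟩ := Set.nonempty_iff_ne_empty.mpr hne
    have hst := Z.2.2 hp
    simp only [strip, Set.mem_prod, Set.mem_Icc, Set.mem_univ, and_true] at hst
    rcases le_total p.1 u1 with h | h
    · have : p ∈ Z.1 ∩ (Set.Icc (0:ℝ) u1 ×ˢ (Set.univ : Set Unit)) :=
        ⟨hp, by simp [Set.mem_Icc, hst.1, h]⟩
      rw [hA] at this; exact this
    · have : p ∈ Z.1 ∩ (Set.Icc u1 (u1 + u2) ×ˢ (Set.univ : Set Unit)) :=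
        ⟨hp, by simp [Set.mem_Icc, h, hst.2]⟩
      rw [hB] at this; exact this
  · rintro rfl
    constructor <;> simp [emptyCl]

end ConcatAux
/-- Proposition 4.14: a sufficient criterion for Hellinger
smallness, in terms of block-occupancy events.  Fix `s,t > 0`; for `λ > 0` write
`u = λs + λt`, `u₁ = λs`, `u₂ = λt`, and `σ = (ν_{u₁} ⊗ ν_{u₂}) ∘ ⊕⁻¹`.  If (i) the
nonemptiness probabilities are linearly small, (ii) the two-block event is
quadratically small, (iii) the vacuum weight is consistent to second order, and
(iv) the one-block squared Hellinger distances are quadratically small, then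
`1 - H(ν_u, σ) = O(u²)` as `λ ↓ 0`. -/
theorem hellinger_small_criterion
    (ν : (t : ℝ) → Measure (Cl Unit t)) (hν : IsFactorizing ν)
    (s t : ℝ) (hs : 0 < s) (ht : 0 < t)
    (C lam0 : ℝ) (hlam0 : 0 < lam0)
    (h1 : ∀ lam : ℝ, 0 < lam → lam ≤ lam0 →
      ν (lam * s + lam * t) {Z : Cl Unit (lam * s + lam * t) | Z.1.Nonempty}
          ≤ ENNReal.ofReal (C * (lam * s + lam * t)) ∧
      ν (lam * s) {Z : Cl Unit (lam * s) | Z.1.Nonempty}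
          ≤ ENNReal.ofReal (C * (lam * s)) ∧
      ν (lam * t) {Z : Cl Unit (lam * t) | Z.1.Nonempty}
          ≤ ENNReal.ofReal (C * (lam * t)))
    (h2 : ∀ lam : ℝ, 0 < lam → lam ≤ lam0 →
      ν (lam * s + lam * t)
          (hitsIcc (lam * s + lam * t) 0 (lam * s) ∩
           hitsIcc (lam * s + lam * t) (lam * s) (lam * s + lam * t))
        ≤ ENNReal.ofReal (C * (lam * s + lam * t) ^ 2))
    (h3 : ∀ lam : ℝ, 0 < lam → lam ≤ lam0 →
      |(ν (lam * s + lam * t) {emptyCl Unit (lam * s + lam * t)}).toReal -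
          (ν (lam * s) {emptyCl Unit (lam * s)}).toReal *
          (ν (lam * t) {emptyCl Unit (lam * t)}).toReal|
        ≤ C * (lam * s + lam * t) ^ 2)
    (h4 : ∀ lam : ℝ, 0 < lam → lam ≤ lam0 →
      d2Hell
          ((ν (lam * s + lam * t)).restrict
            (hitsIcc (lam * s + lam * t) 0 (lam * s) ∩
             missIcc (lam * s + lam * t) (lam * s) (lam * s + lam * t)))
          ((Measure.map (concatMap (lam * s) (lam * t))
              ((ν (lam * s)).prod (ν (lam * t)))).restrict
            (hitsIcc (lam * s + lam * t) 0 (lam * s) ∩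
             missIcc (lam * s + lam * t) (lam * s) (lam * s + lam * t)))
        ≤ C * (lam * s + lam * t) ^ 2 ∧
      d2Hell
          ((ν (lam * s + lam * t)).restrict
            (missIcc (lam * s + lam * t) 0 (lam * s) ∩
             hitsIcc (lam * s + lam * t) (lam * s) (lam * s + lam * t)))
          ((Measure.map (concatMap (lam * s) (lam * t))
              ((ν (lam * s)).prod (ν (lam * t)))).restrict
            (missIcc (lam * s + lam * t) 0 (lam * s) ∩
             hitsIcc (lam * s + lam * t) (lam * s) (lam * s + lam * t)))
        ≤ C * (lam * s + lam * t) ^ 2) :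
    ∃ C' lam0' : ℝ, 0 < lam0' ∧ ∀ lam : ℝ, 0 < lam → lam ≤ lam0' →
      1 - hellingerAff (ν (lam * s + lam * t))
            (Measure.map (concatMap (lam * s) (lam * t))
              ((ν (lam * s)).prod (ν (lam * t))))
        ≤ C' * (lam * s + lam * t) ^ 2 := by

  obtain ⟨hprob, hfac, hnull⟩ := hν
  have hC0 : 0 ≤ C := by
    have h := h3 lam0 hlam0 le_rfl
    have habs : (0:ℝ) ≤ |(ν (lam0 * s + lam0 * t) {emptyCl Unit (lam0 * s + lam0 * t)}).toReal -
        (ν (lam0 * s) {emptyCl Unit (lam0 * s)}).toReal *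
        (ν (lam0 * t) {emptyCl Unit (lam0 * t)}).toReal| := abs_nonneg _
    have hu2 : 0 < (lam0 * s + lam0 * t) ^ 2 := by positivity
    nlinarith
  refine ⟨(4 * C + C ^ 2) / 2, lam0, hlam0, ?_⟩
  intro lam hlam hle
  obtain ⟨hU, hU1, hU2⟩ := h1 lam hlam hle
  have hD2 := h2 lam hlam hle
  have hA3 := h3 lam hlam hle
  obtain ⟨hB4, hC4⟩ := h4 lam hlam hle
  simp only [hitsIcc_eq_compl] at hD2 hB4 hC4
  set u1 := lam * s with hu1def
  set u2 := lam * t with hu2def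
  have hu1p : 0 < u1 := mul_pos hlam hs
  have hu2p : 0 < u2 := mul_pos hlam ht
  have hup : 0 < u1 + u2 := by linarith
  haveI hP12 : IsProbabilityMeasure (ν (u1 + u2)) := hprob _ hup
  haveI hP1 : IsProbabilityMeasure (ν u1) := hprob _ hu1p
  haveI hP2 : IsProbabilityMeasure (ν u2) := hprob _ hu2p
  set ρ := ν (u1 + u2) with hρdef
  set η := Measure.map (concatMap u1 u2) ((ν u1).prod (ν u2)) with hηdef
  -- η is a probability measure
  have hηne : η ≠ 0 := by
    intro h0
    have hac := (hfac u1 u2 hu1p hu2p).1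
    rw [← hηdef, h0] at hac
    have h0' : ρ Set.univ = 0 := hac (by simp)
    rw [measure_univ] at h0'
    exact one_ne_zero h0'
  have hAEm : AEMeasurable (concatMap u1 u2) ((ν u1).prod (ν u2)) := by
    by_contra hc
    exact hηne (by rw [hηdef, Measure.map_of_not_aemeasurable hc])
  haveI hPη : IsProbabilityMeasure η := ⟨by
    rw [hηdef, Measure.map_apply_of_aemeasurable hAEm MeasurableSet.univ,
      Set.preimage_univ, measure_univ]⟩
  -- the four events
  set M1 := missIcc (u1 + u2) 0 u1 with hM1def
  set M2 := missIcc (u1 + u2) u1 (u1 + u2) with hM2def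
  set A := M1 ∩ M2 with hAdef
  set B := M1ᶜ ∩ M2 with hBdef
  set Cev := M1 ∩ M2ᶜ with hCdef
  set D := M1ᶜ ∩ M2ᶜ with hDdef
  have hM1m : MeasurableSet M1 := by
    rw [hM1def]; exact measurableSet_missIcc le_rfl (by linarith)
  have hM2m : MeasurableSet M2 := by
    rw [hM2def]; exact measurableSet_missIcc hu1p.le le_rfl
  have hAm : MeasurableSet A := hM1m.inter hM2m
  have hBm : MeasurableSet B := hM1m.compl.inter hM2m
  have hCm : MeasurableSet Cev := hM1m.inter hM2m.compl
  have hDm : MeasurableSet D := hM1m.compl.inter hM2m.compl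
  have hABCD : A ∪ (B ∪ (Cev ∪ D)) = Set.univ := by
    ext Z
    by_cases hZ1 : Z ∈ M1 <;> by_cases hZ2 : Z ∈ M2 <;>
      simp [hAdef, hBdef, hCdef, hDdef, hZ1, hZ2]
  have hd3 : Disjoint Cev D := by
    rw [Set.disjoint_left]
    rintro Z ⟨hz1, -⟩ ⟨hz1', -⟩
    exact hz1' hz1
  have hd2 : Disjoint B (Cev ∪ D) := by
    rw [Set.disjoint_left]
    rintro Z ⟨hz1, hz2⟩ (⟨hz1', -⟩ | ⟨-, hz2'⟩)
    · exact hz1 hz1'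
    · exact hz2' hz2
  have hd1 : Disjoint A (B ∪ (Cev ∪ D)) := by
    rw [Set.disjoint_left]
    rintro Z ⟨hz1, hz2⟩ (⟨hz1', -⟩ | (⟨-, hz2'⟩ | ⟨hz1', -⟩))
    · exact hz1' hz1
    · exact hz2' hz2
    · exact hz1' hz1
  -- the Hellinger integrand
  have eH0 : hellingerAff ρ η
      = (∫⁻ x, (ρ.rnDeriv (ρ + η) x * η.rnDeriv (ρ + η) x) ^ (1/2 : ℝ) ∂(ρ + η)).toReal := rfl
  have hKtop : (∫⁻ x, (ρ.rnDeriv (ρ + η) x * η.rnDeriv (ρ + η) x) ^ (1/2 : ℝ) ∂(ρ + η)) ≠ ⊤ := by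
    apply ne_top_of_le_ne_top
      (b := ∫⁻ x, (ρ.rnDeriv (ρ + η) x + η.rnDeriv (ρ + η) x) ∂(ρ + η))
    · rw [lintegral_add_left (Measure.measurable_rnDeriv _ _)]
      exact ne_top_of_le_ne_top
        (ENNReal.add_ne_top.mpr ⟨measure_ne_top _ _, measure_ne_top _ _⟩)
        (add_le_add Measure.lintegral_rnDeriv_le Measure.lintegral_rnDeriv_le)
    · exact lintegral_mono fun x => rpow_half_mul_le _ _
  have hKEtop : ∀ E : Set (Cl Unit (u1 + u2)),
      (∫⁻ x in E, (ρ.rnDeriv (ρ + η) x * η.rnDeriv (ρ + η) x) ^ (1/2 : ℝ) ∂(ρ + η)) ≠ ⊤ :=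
    fun E => ne_top_of_le_ne_top hKtop (setLIntegral_le_lintegral _ _)
  -- split the affinity integral over the four events
  have hK3 : (∫⁻ x, (ρ.rnDeriv (ρ + η) x * η.rnDeriv (ρ + η) x) ^ (1/2 : ℝ) ∂(ρ + η))
      = (∫⁻ x in A, (ρ.rnDeriv (ρ + η) x * η.rnDeriv (ρ + η) x) ^ (1/2 : ℝ) ∂(ρ + η))
        + ((∫⁻ x in B, (ρ.rnDeriv (ρ + η) x * η.rnDeriv (ρ + η) x) ^ (1/2 : ℝ) ∂(ρ + η))
          + ((∫⁻ x in Cev, (ρ.rnDeriv (ρ + η) x * η.rnDeriv (ρ + η) x) ^ (1/2 : ℝ) ∂(ρ + η))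
            + (∫⁻ x in D, (ρ.rnDeriv (ρ + η) x * η.rnDeriv (ρ + η) x) ^ (1/2 : ℝ) ∂(ρ + η)))) := by
    rw [← setLIntegral_univ, ← hABCD,
      lintegral_union (hBm.union (hCm.union hDm)) hd1,
      lintegral_union (hCm.union hDm) hd2,
      lintegral_union hDm hd3]
  have eH : hellingerAff ρ η
      = (∫⁻ x in A, (ρ.rnDeriv (ρ + η) x * η.rnDeriv (ρ + η) x) ^ (1/2 : ℝ) ∂(ρ + η)).toReal
        + ((∫⁻ x in B, (ρ.rnDeriv (ρ + η) x * η.rnDeriv (ρ + η) x) ^ (1/2 : ℝ) ∂(ρ + η)).toReal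
          + ((∫⁻ x in Cev, (ρ.rnDeriv (ρ + η) x * η.rnDeriv (ρ + η) x) ^ (1/2 : ℝ) ∂(ρ + η)).toReal
            + (∫⁻ x in D, (ρ.rnDeriv (ρ + η) x * η.rnDeriv (ρ + η) x) ^ (1/2 : ℝ) ∂(ρ + η)).toReal)) := by
    rw [eH0, hK3, ENNReal.toReal_add (hKEtop A)
        (ENNReal.add_ne_top.mpr ⟨hKEtop B, ENNReal.add_ne_top.mpr ⟨hKEtop Cev, hKEtop D⟩⟩),
      ENNReal.toReal_add (hKEtop B) (ENNReal.add_ne_top.mpr ⟨hKEtop Cev, hKEtop D⟩),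
      ENNReal.toReal_add (hKEtop Cev) (hKEtop D)]
  -- mass splits
  have hmass : ∀ μ : Measure (Cl Unit (u1 + u2)), IsProbabilityMeasure μ →
      (μ A).toReal + ((μ B).toReal + ((μ Cev).toReal + (μ D).toReal)) = 1 := by
    intro μ hμ
    have hsplit : μ Set.univ = μ A + (μ B + (μ Cev + μ D)) := by
      rw [← hABCD, measure_union hd1 (hBm.union (hCm.union hDm)),
        measure_union hd2 (hCm.union hDm), measure_union hd3 hDm]
    have := congrArg ENNReal.toReal hsplit
    rw [measure_univ, ENNReal.toReal_one,
      ENNReal.toReal_add (measure_ne_top _ _)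
        (ENNReal.add_ne_top.mpr ⟨measure_ne_top _ _,
          ENNReal.add_ne_top.mpr ⟨measure_ne_top _ _, measure_ne_top _ _⟩⟩),
      ENNReal.toReal_add (measure_ne_top _ _)
        (ENNReal.add_ne_top.mpr ⟨measure_ne_top _ _, measure_ne_top _ _⟩),
      ENNReal.toReal_add (measure_ne_top _ _) (measure_ne_top _ _)] at this
    linarith
  have e1 := hmass ρ hP12
  have e2 := hmass η hPη
  -- block B and C bounds from the hypothesis h4
  have hB4' : (ρ B).toReal + (η B).toReal
      - 2 * (∫⁻ x in B, (ρ.rnDeriv (ρ + η) x * η.rnDeriv (ρ + η) x) ^ (1/2 : ℝ) ∂(ρ + η)).toReal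
      ≤ C * (u1 + u2) ^ 2 := by
    rw [← d2Hell_restrict_eq ρ η hBm]
    exact hB4
  have hC4' : (ρ Cev).toReal + (η Cev).toReal
      - 2 * (∫⁻ x in Cev, (ρ.rnDeriv (ρ + η) x * η.rnDeriv (ρ + η) x) ^ (1/2 : ℝ) ∂(ρ + η)).toReal
      ≤ C * (u1 + u2) ^ 2 := by
    rw [← d2Hell_restrict_eq ρ η hCm]
    exact hC4
  -- block D bounds
  have haD : (ρ D).toReal ≤ C * (u1 + u2) ^ 2 := by
    refine le_trans (ENNReal.toReal_mono ENNReal.ofReal_ne_top hD2) ?_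
    rw [ENNReal.toReal_ofReal (by positivity)]
  have hDeq : D = hitsIcc (u1 + u2) 0 u1 ∩ hitsIcc (u1 + u2) u1 (u1 + u2) := by
    rw [hDdef, hM1def, hM2def, hitsIcc_eq_compl, hitsIcc_eq_compl]
  have hbD : (η D).toReal ≤ C * u1 * (C * u2) := by
    have hsub : concatMap u1 u2 ⁻¹' D ⊆
        ({Z : Cl Unit u1 | Z.1.Nonempty} ×ˢ {Z : Cl Unit u2 | Z.1.Nonempty})
          ∪ ((Set.univ : Set (Cl Unit u1)) ×ˢ
              {Z : Cl Unit u2 | ∃ ℓ : Unit, ((0:ℝ), ℓ) ∈ Z.1})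
          ∪ ({Z : Cl Unit u1 | ∃ ℓ : Unit, (u1, ℓ) ∈ Z.1} ×ˢ
              (Set.univ : Set (Cl Unit u2))) := by
      rw [hDeq]
      exact concatMap_preimage_hits_subset hu1p.le hu2p.le
    have hstep : η D ≤ ENNReal.ofReal (C * u1) * ENNReal.ofReal (C * u2) := by
      rw [hηdef, Measure.map_apply_of_aemeasurable hAEm hDm]
      refine le_trans (measure_mono hsub) ?_
      refine le_trans (measure_union_le _ _) ?_
      refine le_trans (add_le_add_left (measure_union_le _ _) _) ?_
      rw [Measure.prod_prod, Measure.prod_prod, Measure.prod_prod]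
      have hN2 : ν u2 {Z : Cl Unit u2 | ∃ ℓ : Unit, ((0:ℝ), ℓ) ∈ Z.1} = 0 :=
        hnull u2 hu2p 0 ⟨le_rfl, hu2p.le⟩
      have hN1 : ν u1 {Z : Cl Unit u1 | ∃ ℓ : Unit, (u1, ℓ) ∈ Z.1} = 0 :=
        hnull u1 hu1p u1 ⟨hu1p.le, le_rfl⟩
      rw [hN1, hN2, mul_zero, zero_mul, add_zero, add_zero]
      exact mul_le_mul' hU1 hU2
    have hfin := ENNReal.toReal_mono
      (ENNReal.mul_ne_top ENNReal.ofReal_ne_top ENNReal.ofReal_ne_top) hstep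
    rw [ENNReal.toReal_mul, ENNReal.toReal_ofReal (by positivity),
      ENNReal.toReal_ofReal (by positivity)] at hfin
    exact hfin
  -- block A : the vacuum block
  have hAeq : A = ({emptyCl Unit (u1 + u2)} : Set (Cl Unit (u1 + u2))) := by
    rw [hAdef, hM1def, hM2def]
    exact missIcc_inter_missIcc_eq hu1p.le hu2p.le
  have hkA : (∫⁻ x in A, (ρ.rnDeriv (ρ + η) x * η.rnDeriv (ρ + η) x) ^ (1/2 : ℝ) ∂(ρ + η)).toReal
      = Real.sqrt ((ρ A).toReal * (η A).toReal) := by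
    rw [hAeq]
    exact sqrt_lintegral_singleton ρ η (measurableSet_singleton_emptyCl _)
  have hbA : (η A).toReal
      = (ν u1 {emptyCl Unit u1}).toReal * (ν u2 {emptyCl Unit u2}).toReal := by
    rw [hAeq, hηdef, Measure.map_apply_of_aemeasurable hAEm (measurableSet_singleton_emptyCl _),
      concatMap_preimage_emptyCl hu1p.le hu2p.le, Measure.prod_prod, ENNReal.toReal_mul]
  have hdA : (ρ A).toReal + (η A).toReal
      - 2 * (∫⁻ x in A, (ρ.rnDeriv (ρ + η) x * η.rnDeriv (ρ + η) x) ^ (1/2 : ℝ) ∂(ρ + η)).toReal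
      ≤ C * (u1 + u2) ^ 2 := by
    rw [hkA]
    refine le_trans (sqrt_diff_sq_le_abs ENNReal.toReal_nonneg ENNReal.toReal_nonneg) ?_
    rw [hbA]
    have : (ρ A).toReal = (ρ {emptyCl Unit (u1 + u2)}).toReal := by rw [hAeq]
    rw [this]
    exact hA3
  -- final assembly
  have hkD : 0 ≤ (∫⁻ x in D,
      (ρ.rnDeriv (ρ + η) x * η.rnDeriv (ρ + η) x) ^ (1/2 : ℝ) ∂(ρ + η)).toReal :=
    ENNReal.toReal_nonneg
  have hmul : C * u1 * (C * u2) ≤ C ^ 2 * (u1 + u2) ^ 2 := by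
    nlinarith [sq_nonneg (C * u1), sq_nonneg (C * u2),
      mul_nonneg (mul_nonneg hC0 hu1p.le) (mul_nonneg hC0 hu2p.le)]
  rw [eH]
  linarith [hdA, hB4', hC4', haD, hbD, hkD, e1, e2, hmul]

end RandomSets
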